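/- Suppose $0 < \chi \le 1$ and $0 < w_i \le 1$ for each $i$, with $\sum_i w_i = 1$, $\sum_i w_i^2 = \chi$, and $\chi\kappa \ge 1$ where $\kappa$ is the number of terms. Then $\sum_{i: w_i \le 6\chi} \frac{1}{4}\left(1 - e^{-w_i\kappa/6}\right) \ge \frac{1}{38\chi}\sum_{i : w_i \le 6\chi} w_i$, and consequently $\sum_i \frac{1}{4}(1 - e^{-w_i\kappa/6}) \ge \frac{1}{46\chi}$. -/

import Mathlib

theorem stmt14 (κ : ℕ) (w : Fin κ → ℝ) (hw0 : ∀ i, 0 < w i) (hw1 : ∀ i, w i ≤ 1)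
    (hsum : ∑ i, w i = 1) (χ : ℝ) (hχ : χ = ∑ i, (w i) ^ 2)
    (hχ0 : 0 < χ) (hχ1 : χ ≤ 1) (hχκ : 1 ≤ χ * κ) :
    ∑ i ∈ Finset.univ.filter (fun i => w i ≤ 6 * χ),
        (1 / 4) * (1 - Real.exp (-(w i * κ / 6))) ≥
      (1 / (38 * χ)) * ∑ i ∈ Finset.univ.filter (fun i => w i ≤ 6 * χ), w i ∧
    ∑ i, (1 / 4) * (1 - Real.exp (-(w i * κ / 6))) ≥ 1 / (46 * χ) := by
  have hκ0 : (0:ℝ) < κ := by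
    by_contra h
    push_neg at h
    have : (κ:ℝ) = 0 := le_antisymm h (Nat.cast_nonneg κ)
    rw [this, mul_zero] at hχκ; linarith
  have hexpinv : Real.exp (-1) < 7/19 := by
    rw [Real.exp_neg]
    rw [inv_lt_comm₀ (Real.exp_pos 1) (by norm_num)]
    have := Real.exp_one_gt_d9
    linarith
  -- pointwise key inequality on the filtered set
  have key : ∀ i ∈ Finset.univ.filter (fun i => w i ≤ 6 * χ),
      1/(38*χ) * w i ≤ 1/4 * (1 - Real.exp (-(w i * κ / 6))) := by
    intro i hi
    simp only [Finset.mem_filter] at hi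
    have hwi := hw0 i
    have h6χ : (0:ℝ) < 6 * χ := by linarith
    set a : ℝ := w i / (6*χ) with ha
    have ha0 : 0 < a := by positivity
    have ha1 : a ≤ 1 := by rw [ha, div_le_one h6χ]; exact hi.2
    have hconv := convexOn_exp.2 (Set.mem_univ (-(χ*κ))) (Set.mem_univ 0)
      (le_of_lt ha0) (by linarith : (0:ℝ) ≤ 1 - a) (by ring)
    simp only [smul_eq_mul, mul_zero, add_zero, Real.exp_zero, mul_one] at hconv
    have heq : a * -(χ * ↑κ) = -(w i * κ / 6) := by
      rw [ha]; field_simp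
    rw [heq] at hconv
    -- exp(-(w i * κ / 6)) ≤ a * exp(-(χκ)) + (1-a)
    have hTe : Real.exp (-(χ*κ)) ≤ Real.exp (-1) :=
      Real.exp_le_exp.2 (by linarith)
    have hbound : Real.exp (-(w i * κ / 6)) ≤ a * (7/19) + (1 - a) := by
      have : a * Real.exp (-(χ*κ)) ≤ a * (7/19) := by
        have := hTe.trans hexpinv.le
        nlinarith
      linarith
    have haw : 1/(38*χ) * w i = a * (3/19) := by
      rw [ha]; field_simp; ring
    rw [haw]
    nlinarith
  constructor
  · rw [ge_iff_le, Finset.mul_sum]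
    exact Finset.sum_le_sum key
  · -- Markov: sum of w on complement ≤ 1/6
    have hnn : ∀ i ∈ Finset.univ, i ∉ Finset.univ.filter (fun i => w i ≤ 6 * χ) →
        0 ≤ (1/4) * (1 - Real.exp (-(w i * κ / 6))) := by
      intro i _ _
      have : Real.exp (-(w i * κ / 6)) ≤ 1 := by
        rw [Real.exp_le_one_iff]
        have h := (hw0 i).le
        rw [neg_nonpos]
        positivity
      linarith
    have hsub : ∑ i ∈ Finset.univ.filter (fun i => w i ≤ 6 * χ),
        (1/4) * (1 - Real.exp (-(w i * κ / 6))) ≤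
        ∑ i, (1/4) * (1 - Real.exp (-(w i * κ / 6))) :=
      Finset.sum_le_sum_of_subset_of_nonneg (Finset.filter_subset _ _) hnn
    have hmark : ∑ i ∈ Finset.univ.filter (fun i => ¬ w i ≤ 6 * χ), w i ≤ 1/6 := by
      have h1 : ∑ i ∈ Finset.univ.filter (fun i => ¬ w i ≤ 6 * χ), w i ≤
          ∑ i ∈ Finset.univ.filter (fun i => ¬ w i ≤ 6 * χ), (w i)^2 / (6*χ) := by
        apply Finset.sum_le_sum
        intro i hi
        simp only [Finset.mem_filter, not_le] at hi
        rw [le_div_iff₀ (by linarith)]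
        nlinarith [hw0 i, hi.2]
      have h2 : ∑ i ∈ Finset.univ.filter (fun i => ¬ w i ≤ 6 * χ), (w i)^2 / (6*χ) ≤
          ∑ i, (w i)^2 / (6*χ) := by
        apply Finset.sum_le_sum_of_subset_of_nonneg (Finset.filter_subset _ _)
        intro i _ _
        positivity
      have h3 : ∑ i, (w i)^2 / (6*χ) = 1/6 := by
        rw [← Finset.sum_div, ← hχ]
        field_simp
      linarith
    have hS : (5:ℝ)/6 ≤ ∑ i ∈ Finset.univ.filter (fun i => w i ≤ 6 * χ), w i := by
      have := Finset.sum_filter_add_sum_filter_not Finset.univ (fun i => w i ≤ 6 * χ) w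
      rw [hsum] at this
      linarith
    have hstep : 1/(38*χ) * ∑ i ∈ Finset.univ.filter (fun i => w i ≤ 6 * χ), w i ≥
        1/(46*χ) := by
      rw [ge_iff_le]
      have h38 : (0:ℝ) < 38 * χ := by linarith
      calc 1/(46*χ) ≤ 1/(38*χ) * (5/6) := by
            rw [div_mul_eq_mul_div, one_mul, div_le_div_iff₀ (by linarith) (by positivity)]
            nlinarith
        _ ≤ 1/(38*χ) * ∑ i ∈ Finset.univ.filter (fun i => w i ≤ 6 * χ), w i := by
            apply mul_le_mul_of_nonneg_left hS (by positivity)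
    have := Finset.sum_le_sum key
    rw [← Finset.mul_sum] at this
    linarith
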